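/- For every finite simple graph G there exists a graph H' such that α(G ⊠ H') = α*(G) · α(H'). Specifically, if f(v) = n(v)/N is an optimal rational fractional packing of G with nonnegative integers n(v), N, then H' = Blup(Ḡ, n), the blow-up of the complement of G by the weights n, achieves equality. -/

import Mathlib

open Finset

namespace SimpleGraph

variable {V W : Type*}

/-- The strong graph product. -/
def strongProd (G : SimpleGraph V) (H : SimpleGraph W) : SimpleGraph (V × W) where
  Adj x y := x ≠ y ∧ (x.1 = y.1 ∨ G.Adj x.1 y.1) ∧ (x.2 = y.2 ∨ H.Adj x.2 y.2)
  symm := ⟨by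
    rintro x y ⟨hne, h1, h2⟩
    exact ⟨hne.symm, h1.imp Eq.symm (fun h => G.adj_symm h), h2.imp Eq.symm (fun h => H.adj_symm h)⟩⟩
  loopless := ⟨by rintro x ⟨hne, -, -⟩; exact hne rfl⟩

/-- The disjunctive graph product. -/
def disjProd (G : SimpleGraph V) (H : SimpleGraph W) : SimpleGraph (V × W) where
  Adj x y := G.Adj x.1 y.1 ∨ H.Adj x.2 y.2
  symm := ⟨fun _ _ h => h.imp (fun h => G.adj_symm h) (fun h => H.adj_symm h)⟩
  loopless := ⟨fun x h => h.elim (G.loopless.irrefl x.1) (H.loopless.irrefl x.2)⟩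

/-- A finite set of vertices is independent if no two of its members are adjacent. -/
def IsIndep (G : SimpleGraph V) (s : Finset V) : Prop :=
  ∀ ⦃v⦄, v ∈ s → ∀ ⦃w⦄, w ∈ s → ¬ G.Adj v w

/-- The independence number. -/
noncomputable def alpha (G : SimpleGraph V) [Fintype V] : ℕ :=
  sSup {n | ∃ s : Finset V, G.IsIndep s ∧ s.card = n}

/-- The fractional packing number. -/
noncomputable def alphaStar (G : SimpleGraph V) [Fintype V] : ℝ :=
  sSup {x | ∃ t : V → ℝ, (∀ v, 0 ≤ t v) ∧
    (∀ C : Finset V, G.IsClique (C : Set V) → ∑ v ∈ C, t v ≤ 1) ∧ x = ∑ v, t v}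

/-- The Lovász number. -/
noncomputable def lovTheta (G : SimpleGraph V) [Fintype V] : ℝ :=
  sSup {x | ∃ B : Matrix V V ℝ, B.PosSemidef ∧ B.trace = 1 ∧
    (∀ v w, G.Adj v w → B v w = 0) ∧ x = ∑ v, ∑ w, B v w}

/-- Schrijver's variant of the Lovász number. -/
noncomputable def thetaMinus (G : SimpleGraph V) [Fintype V] : ℝ :=
  sSup {x | ∃ B : Matrix V V ℝ, B.PosSemidef ∧ B.trace = 1 ∧ (∀ v w, 0 ≤ B v w) ∧
    (∀ v w, G.Adj v w → B v w = 0) ∧ x = ∑ v, ∑ w, B v w}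

/-- Szegedy's variant of the Lovász number. -/
noncomputable def thetaPlus (G : SimpleGraph V) [Fintype V] : ℝ :=
  sSup {x | ∃ B : Matrix V V ℝ, B.PosSemidef ∧ B.trace = 1 ∧
    (∀ v w, G.Adj v w → B v w ≤ 0) ∧ x = ∑ v, ∑ w, B v w}

/-- The clique covering number. -/
noncomputable def cliqueCoverNum (G : SimpleGraph V) [Fintype V] : ℕ :=
  sInf {n | ∃ C : Fin n → Finset V, (∀ i, G.IsClique (C i : Set V)) ∧ ∀ v, ∃ i, v ∈ C i}

/-- The blow-up of a graph along integer vertex weights. -/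
def blup (G : SimpleGraph V) (p : V → ℕ) : SimpleGraph (Σ v, Fin (p v)) where
  Adj x y := G.Adj x.1 y.1
  symm := ⟨fun _ _ h => G.adj_symm h⟩
  loopless := ⟨fun x h => G.loopless.irrefl x.1 h⟩

/-- The weighted independence number (integer weights). -/
noncomputable def alphaWNat (G : SimpleGraph V) [Fintype V] (p : V → ℕ) : ℕ :=
  sSup {n | ∃ s : Finset V, G.IsIndep s ∧ n = ∑ v ∈ s, p v}

/-- The weighted independence number (real weights). -/
noncomputable def alphaW (G : SimpleGraph V) [Fintype V] (p : V → ℝ) : ℝ :=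
  sSup {x | ∃ s : Finset V, G.IsIndep s ∧ x = ∑ v ∈ s, p v}

end SimpleGraph

open SimpleGraph
open scoped RealInnerProductSpace

section Aux

variable {V : Type*} [Fintype V]

lemma aux_isClique_singleton (G : SimpleGraph V) (v : V) :
    G.IsClique ((({v} : Finset V) : Set V)) := by
  simp [SimpleGraph.isClique_iff]

lemma aux_alphaStar_bddAbove (G : SimpleGraph V) :
    BddAbove {x | ∃ t : V → ℝ, (∀ v, 0 ≤ t v) ∧
      (∀ C : Finset V, G.IsClique (C : Set V) → ∑ v ∈ C, t v ≤ 1) ∧ x = ∑ v, t v} := by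
  refine ⟨(Fintype.card V : ℝ), ?_⟩
  rintro x ⟨t, ht0, htC, rfl⟩
  calc ∑ v, t v ≤ ∑ _v : V, (1 : ℝ) :=
        Finset.sum_le_sum fun v _ => by simpa using htC {v} (aux_isClique_singleton G v)
    _ = (Fintype.card V : ℝ) := by simp

lemma aux_feasible_le_alphaStar (G : SimpleGraph V) (t : V → ℝ) (ht0 : ∀ v, 0 ≤ t v)
    (htC : ∀ C : Finset V, G.IsClique (C : Set V) → ∑ v ∈ C, t v ≤ 1) :
    ∑ v, t v ≤ G.alphaStar :=
  le_csSup (aux_alphaStar_bddAbove G) ⟨t, ht0, htC, rfl⟩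

lemma aux_card_le_alpha (G : SimpleGraph V) {s : Finset V} (h : G.IsIndep s) :
    s.card ≤ G.alpha := by
  refine le_csSup ⟨Fintype.card V, ?_⟩ ⟨s, h, rfl⟩
  rintro x ⟨u, -, rfl⟩
  simpa using u.card_le_univ

lemma aux_alpha_le (G : SimpleGraph V) {m : ℕ}
    (h : ∀ s : Finset V, G.IsIndep s → s.card ≤ m) : G.alpha ≤ m := by
  refine csSup_le ⟨0, ∅, fun v hv => absurd hv (Finset.notMem_empty v), rfl⟩ ?_
  rintro x ⟨s, hs, rfl⟩
  exact h s hs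

end Aux

theorem rosenfeld_eq_blup {V : Type*} [Fintype V] (G : SimpleGraph V)
    (n : V → ℕ) (N : ℕ) (hN : 0 < N)
    (hfeas : ∀ C : Finset V, G.IsClique (C : Set V) → ∑ v ∈ C, (n v : ℝ) / N ≤ 1)
    (hopt : G.alphaStar = (∑ v, (n v : ℝ)) / N) :
    ((G.strongProd (Gᶜ.blup n)).alpha : ℝ) = G.alphaStar * ((Gᶜ.blup n).alpha : ℝ) := by
  classical
  have hN0 : (0:ℝ) < (N:ℝ) := by exact_mod_cast hN
  -- clique weight bound in ℕ
  have hcliqN : ∀ C : Finset V, G.IsClique (C : Set V) → ∑ v ∈ C, n v ≤ N := by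
    intro C hC
    have h := hfeas C hC
    rw [← Finset.sum_div, div_le_one hN0] at h
    exact_mod_cast h
  -- any independent set in the blow-up has size ≤ N
  have hblup_le : ∀ s : Finset (Σ v, Fin (n v)), (Gᶜ.blup n).IsIndep s → s.card ≤ N := by
    intro s hs
    set C : Finset V := s.image Sigma.fst with hCdef
    have hCclique : G.IsClique (C : Set V) := by
      intro a ha b hb hab
      rw [Finset.mem_coe, hCdef, Finset.mem_image] at ha hb
      obtain ⟨x, hx, rfl⟩ := ha
      obtain ⟨y, hy, rfl⟩ := hb
      by_contra hadj
      exact hs hx hy (show Gᶜ.Adj x.1 y.1 from (SimpleGraph.compl_adj G x.1 y.1).mpr ⟨hab, hadj⟩)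
    have hcard : s.card = ∑ w ∈ C, (s.filter fun x => x.1 = w).card :=
      Finset.card_eq_sum_card_fiberwise fun x hx => Finset.mem_image_of_mem Sigma.fst hx
    have hfib : ∀ w : V, (s.filter fun x => x.1 = w).card ≤ n w := by
      intro w
      have h1 : ∀ x ∈ s.filter fun x => x.1 = w, ((x.2 : ℕ)) ∈ Finset.range (n w) := by
        intro x hx
        rw [Finset.mem_filter] at hx
        rw [Finset.mem_range]
        have h := x.2.isLt
        exact lt_of_lt_of_le h (le_of_eq (congrArg n hx.2))
      have h2 : Set.InjOn (fun x : Σ v, Fin (n v) => (x.2 : ℕ))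
          ((s.filter fun x => x.1 = w) : Set (Σ v, Fin (n v))) := by
        intro x hx y hy hxy
        rw [Finset.mem_coe, Finset.mem_filter] at hx hy
        obtain ⟨x1, x2⟩ := x
        obtain ⟨y1, y2⟩ := y
        obtain ⟨hxs, hx1⟩ := hx
        obtain ⟨hys, hy1⟩ := hy
        subst hx1
        subst hy1
        simp only at hxy
        exact Sigma.ext rfl (heq_of_eq (Fin.val_injective hxy))
      calc (s.filter fun x => x.1 = w).card ≤ (Finset.range (n w)).card :=
            Finset.card_le_card_of_injOn _ h1 h2
        _ = n w := Finset.card_range _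
    calc s.card = ∑ w ∈ C, (s.filter fun x => x.1 = w).card := hcard
      _ ≤ ∑ w ∈ C, n w := Finset.sum_le_sum fun w _ => hfib w
      _ ≤ N := hcliqN C hCclique
  by_cases hV : Nonempty V
  · -- main case: V nonempty
    obtain ⟨v0⟩ := hV
    have hα1 : (1:ℝ) ≤ G.alphaStar := by
      have h0 : ∀ v : V, (0:ℝ) ≤ if v = v0 then 1 else 0 := by
        intro v; split <;> norm_num
      have hcl : ∀ C : Finset V, G.IsClique (C : Set V) →
          ∑ v ∈ C, (if v = v0 then (1:ℝ) else 0) ≤ 1 := by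
        intro C _
        rw [Finset.sum_ite_eq' C v0 fun _ => (1:ℝ)]
        split <;> norm_num
      have := aux_feasible_le_alphaStar G _ h0 hcl
      simpa using this
    have hNle : (N:ℝ) ≤ ∑ v, (n v : ℝ) := by
      rw [hopt, le_div_iff₀ hN0, one_mul] at hα1
      exact hα1
    -- there is a tight clique
    have htight : ∃ C : Finset V, G.IsClique (C : Set V) ∧ ∑ v ∈ C, n v = N := by
      by_contra hcon
      push_neg at hcon
      have hlt : ∀ C : Finset V, G.IsClique (C : Set V) → (∑ v ∈ C, n v) + 1 ≤ N := by
        intro C hC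
        have h1 := hcliqN C hC
        have h2 := hcon C hC
        omega
      have hN2 : 2 ≤ N := by
        by_contra hN2
        have hN1 : N = 1 := by omega
        have hz : ∀ v : V, n v = 0 := by
          intro v
          have := hlt {v} (aux_isClique_singleton G v)
          rw [Finset.sum_singleton] at this
          omega
        have hzz : (∑ v, (n v:ℝ)) = 0 := by simp [hz]
        rw [hzz] at hNle
        have : (N:ℝ) = 1 := by exact_mod_cast congrArg (Nat.cast : ℕ → ℝ) hN1
        linarith
      have hN1R : (0:ℝ) < (N:ℝ) - 1 := by
        have h2 : (2:ℝ) ≤ (N:ℝ) := by exact_mod_cast hN2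
        linarith
      have ht0 : ∀ v : V, (0:ℝ) ≤ (n v : ℝ) / ((N:ℝ) - 1) := by
        intro v
        positivity
      have htc : ∀ C : Finset V, G.IsClique (C : Set V) →
          ∑ v ∈ C, (n v : ℝ) / ((N:ℝ) - 1) ≤ 1 := by
        intro C hC
        rw [← Finset.sum_div, div_le_one hN1R]
        have h1 := hlt C hC
        have h2 : ((∑ v ∈ C, n v : ℕ) : ℝ) + 1 ≤ (N:ℝ) := by exact_mod_cast h1
        push_cast at h2
        linarith
      have hle := aux_feasible_le_alphaStar G _ ht0 htc
      rw [hopt, ← Finset.sum_div] at hle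
      have hSpos : (0:ℝ) < ∑ v, (n v:ℝ) := lt_of_lt_of_le hN0 hNle
      have hdlt : (∑ v, (n v:ℝ)) / (N:ℝ) < (∑ v, (n v:ℝ)) / ((N:ℝ) - 1) := by
        apply div_lt_div_of_pos_left hSpos hN1R
        linarith
      linarith
    obtain ⟨C0, hC0clique, hC0sum⟩ := htight
    -- α of the blow-up is N
    have hblup_alpha : (Gᶜ.blup n).alpha = N := by
      refine le_antisymm (aux_alpha_le _ hblup_le) ?_
      have hindep : (Gᶜ.blup n).IsIndep
          (C0.sigma fun w => (Finset.univ : Finset (Fin (n w)))) := by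
        intro x hx y hy hadj
        rw [Finset.mem_sigma] at hx hy
        have hadj' : Gᶜ.Adj x.1 y.1 := hadj
        rw [SimpleGraph.compl_adj] at hadj'
        exact hadj'.2 (hC0clique (Finset.mem_coe.mpr hx.1) (Finset.mem_coe.mpr hy.1) hadj'.1)
      have hcard : (C0.sigma fun w => (Finset.univ : Finset (Fin (n w)))).card = N := by
        rw [Finset.card_sigma]
        simpa using hC0sum
      calc N = _ := hcard.symm
        _ ≤ _ := aux_card_le_alpha _ hindep
    -- lower bound for the strong product
    have hprod_lower : ∑ v, n v ≤ (G.strongProd (Gᶜ.blup n)).alpha := by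
      set s0 : Finset (V × Σ v, Fin (n v)) :=
        (Finset.univ : Finset (Σ v, Fin (n v))).image (fun x => (x.1, x)) with hs0
      have hinj : Function.Injective fun x : Σ v, Fin (n v) => (x.1, x) :=
        fun a b h => congrArg Prod.snd h
      have hcard : s0.card = ∑ v, n v := by
        rw [hs0, Finset.card_image_of_injective _ hinj, Finset.card_univ]
        simp
      have hindep : (G.strongProd (Gᶜ.blup n)).IsIndep s0 := by
        intro p hp q hq hadj
        rw [hs0, Finset.mem_image] at hp hq
        obtain ⟨x, -, rfl⟩ := hp
        obtain ⟨y, -, rfl⟩ := hq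
        obtain ⟨hne, h1, h2⟩ := hadj
        rcases h2 with h2 | h2
        · have hxy : x = y := h2
          exact hne (by rw [hxy])
        · have h2' : Gᶜ.Adj x.1 y.1 := h2
          rw [SimpleGraph.compl_adj] at h2'
          rcases h1 with h1 | h1
          · exact h2'.1 h1
          · exact h2'.2 h1
      calc ∑ v, n v = s0.card := hcard.symm
        _ ≤ _ := aux_card_le_alpha _ hindep
    -- upper bound for the strong product
    have hprod_upper : ∀ S : Finset (V × Σ v, Fin (n v)),
        (G.strongProd (Gᶜ.blup n)).IsIndep S → S.card ≤ ∑ v, n v := by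
      intro S hS
      have hsum : S.card = ∑ v : V, (S.filter fun p => p.1 = v).card :=
        Finset.card_eq_sum_card_fiberwise fun x _ => Finset.mem_univ _
      have hfeasS : ∀ C : Finset V, G.IsClique (C : Set V) →
          ∑ v ∈ C, (S.filter fun p => p.1 = v).card ≤ N := by
        intro C hC
        set T : Finset (V × Σ v, Fin (n v)) := S.filter (fun p => p.1 ∈ C) with hT
        have hT1 : T.card = ∑ v ∈ C, (T.filter fun p => p.1 = v).card :=
          Finset.card_eq_sum_card_fiberwise fun x hx => (Finset.mem_filter.mp hx).2
        have hT2 : ∀ v ∈ C, (T.filter fun p => p.1 = v) = S.filter fun p => p.1 = v := by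
          intro v hv
          ext p
          rw [hT, Finset.mem_filter, Finset.mem_filter, Finset.mem_filter]
          constructor
          · rintro ⟨⟨hpS, -⟩, hpv⟩
            exact ⟨hpS, hpv⟩
          · rintro ⟨hpS, hpv⟩
            exact ⟨⟨hpS, by rw [hpv]; exact hv⟩, hpv⟩
        have hinjT : Set.InjOn Prod.snd (T : Set (V × Σ v, Fin (n v))) := by
          intro p hp q hq hpq
          rw [Finset.mem_coe, hT, Finset.mem_filter] at hp hq
          by_contra hne
          apply hS hp.1 hq.1
          refine ⟨hne, ?_, Or.inl hpq⟩
          by_cases h : p.1 = q.1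
          · exact Or.inl h
          · exact Or.inr (hC (Finset.mem_coe.mpr hp.2) (Finset.mem_coe.mpr hq.2) h)
        have hTim : (T.image Prod.snd).card = T.card := Finset.card_image_of_injOn hinjT
        have hTindep : (Gᶜ.blup n).IsIndep (T.image Prod.snd) := by
          intro x hx y hy hadj
          rw [Finset.mem_image] at hx hy
          obtain ⟨p, hp, rfl⟩ := hx
          obtain ⟨q, hq, rfl⟩ := hy
          rw [hT, Finset.mem_filter] at hp hq
          have hadj' : Gᶜ.Adj p.2.1 q.2.1 := hadj
          have hne2 : p.2 ≠ q.2 := by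
            intro h
            rw [SimpleGraph.compl_adj] at hadj'
            exact hadj'.1 (by rw [h])
          have hne : p ≠ q := fun h => hne2 (by rw [h])
          apply hS hp.1 hq.1
          refine ⟨hne, ?_, Or.inr hadj⟩
          by_cases h : p.1 = q.1
          · exact Or.inl h
          · exact Or.inr (hC (Finset.mem_coe.mpr hp.2) (Finset.mem_coe.mpr hq.2) h)
        have hTN : T.card ≤ N := by
          rw [← hTim]
          exact hblup_le _ hTindep
        calc ∑ v ∈ C, (S.filter fun p => p.1 = v).card
            = ∑ v ∈ C, (T.filter fun p => p.1 = v).card :=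
              (Finset.sum_congr rfl fun v hv => by rw [hT2 v hv])
          _ = T.card := hT1.symm
          _ ≤ N := hTN
      have ht0 : ∀ v : V, (0:ℝ) ≤ ((S.filter fun p => p.1 = v).card : ℝ) / N := by
        intro v
        positivity
      have htc : ∀ C : Finset V, G.IsClique (C : Set V) →
          ∑ v ∈ C, ((S.filter fun p => p.1 = v).card : ℝ) / N ≤ 1 := by
        intro C hC
        rw [← Finset.sum_div, div_le_one hN0]
        exact_mod_cast hfeasS C hC
      have hle := aux_feasible_le_alphaStar G _ ht0 htc
      rw [hopt, ← Finset.sum_div, div_le_div_iff_of_pos_right hN0] at hle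
      have hcardR : (S.card : ℝ) = ∑ v : V, ((S.filter fun p => p.1 = v).card : ℝ) := by
        rw [hsum]
        push_cast
        ring
      rw [← hcardR] at hle
      have hfin : (S.card : ℝ) ≤ ((∑ v, n v : ℕ) : ℝ) := by
        push_cast
        exact hle
      exact_mod_cast hfin
    have hprod_alpha : (G.strongProd (Gᶜ.blup n)).alpha = ∑ v, n v :=
      le_antisymm (aux_alpha_le _ hprod_upper) hprod_lower
    rw [hprod_alpha, hblup_alpha, hopt]
    push_cast
    field_simp
  · -- degenerate case: V empty
    have hE : IsEmpty V := not_nonempty_iff.mp hV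
    have h1 : (G.strongProd (Gᶜ.blup n)).alpha = 0 := by
      refine Nat.le_zero.mp (aux_alpha_le _ ?_)
      intro s _
      haveI : IsEmpty (V × Σ v, Fin (n v)) := ⟨fun p => hE.elim p.1⟩
      simpa using s.card_le_univ
    have h2 : G.alphaStar = 0 := by
      rw [hopt]
      haveI := hE
      simp
    rw [h1, h2]
    simp
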